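/- arXiv:2006.08244 — 5 statements merged into one kernel-verified Lean document; each statement's English description precedes it below -/
import Mathlib

section
/- Let φ: [0,∞) → [0,∞) satisfy (aInc)_p with constant L ≥ 1 for some p > 1, i.e. φ(s)/s^p ≤ L·φ(t)/t^p whenever 0 < s ≤ t. Then its conjugate φ*(t) = sup_{s≥0}(t·s − φ(s)) satisfies (aDec)_{p/(p−1)} with a constant depending only on L and p, i.e. t ↦ φ*(t)/t^{p/(p−1)} is almost decreasing. -/
/-- The conjugate Φ-function φ*(t) = sup_{s ≥ 0} (t·s − φ(s)), valued in [0,∞]. -/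
noncomputable def conjPhi (φ : ℝ → ℝ) (t : ℝ) : ENNReal :=
  ⨆ s : Set.Ici (0 : ℝ), ENNReal.ofReal (t * s - φ s)

/-- if φ satisfies (aInc)_p with constant L for p > 1, then φ* satisfies
(aDec)_{p/(p−1)} with a constant depending only on L and p. -/
theorem stmt4 (p L : ℝ) (hp : 1 < p) (hL : 1 ≤ L) :
    ∃ L' : ℝ, 1 ≤ L' ∧
      ∀ φ : ℝ → ℝ,
        (∀ t : ℝ, 0 ≤ t → 0 ≤ φ t) →
        (∀ s t : ℝ, 0 < s → s ≤ t → φ s / s ^ p ≤ L * (φ t / t ^ p)) →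
        ∀ s t : ℝ, 0 < s → s ≤ t →
          conjPhi φ t / ENNReal.ofReal t ^ (p / (p - 1)) ≤
            ENNReal.ofReal L' * (conjPhi φ s / ENNReal.ofReal s ^ (p / (p - 1))) := by
  have hp1 : (0:ℝ) < p - 1 := by linarith
  have hp0 : (0:ℝ) < p := by linarith
  have hL0 : (0:ℝ) < L := by linarith
  have hp' : (0:ℝ) < p / (p - 1) := div_pos hp0 hp1
  refine ⟨L ^ (1 / (p - 1)), ?_, ?_⟩
  · exact Real.one_le_rpow hL (by positivity)
  intro φ hφ0 hInc s t hs hst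
  have ht : (0:ℝ) < t := hs.trans_le hst
  set lam : ℝ := (s / (L * t)) ^ (1 / (p - 1)) with hlam_def
  have hx0 : (0:ℝ) < s / (L * t) := by positivity
  have hlam_pos : 0 < lam := Real.rpow_pos_of_pos hx0 _
  have hx1 : s / (L * t) ≤ 1 := by
    rw [div_le_one (by positivity)]
    calc s ≤ t := hst
    _ = 1 * t := (one_mul t).symm
    _ ≤ L * t := by nlinarith
  have hlam_le1 : lam ≤ 1 := Real.rpow_le_one hx0.le hx1 (by positivity)
  set C : ℝ := lam ^ (-p) / L with hC_def
  have hC0 : 0 < C := by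
    have := Real.rpow_pos_of_pos hlam_pos (-p)
    positivity
  -- C * (s * lam) = t
  have hlam_pow : ∀ y : ℝ, lam ^ y = (s / (L * t)) ^ ((1 / (p - 1)) * y) := by
    intro y
    rw [hlam_def, ← Real.rpow_mul hx0.le]
  have hCsl : C * (s * lam) = t := by
    have h1 : lam ^ (-p) * lam = lam ^ (1 - p) := by
      nth_rewrite 2 [show lam = lam ^ (1:ℝ) by rw [Real.rpow_one]]
      rw [← Real.rpow_add hlam_pos]; ring_nf
    have h2 : lam ^ (1 - p) = (s / (L * t))⁻¹ := by
      rw [hlam_pow, show (1 / (p - 1)) * (1 - p) = -1 by field_simp; ring,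
        Real.rpow_neg_one]
    have h3 : (s / (L * t))⁻¹ = L * t / s := by
      field_simp
    rw [hC_def]
    field_simp
    calc lam ^ (-p) * s * lam = (lam ^ (-p) * lam) * s := by ring
    _ = (L * t / s) * s := by rw [h1, h2, h3]
    _ = L * t := by field_simp
  -- C * φ (lam * u) ≤ φ u for u > 0
  have hkey : ∀ u : ℝ, 0 < u → C * φ (lam * u) ≤ φ u := by
    intro u hu
    have hlu : 0 < lam * u := by positivity
    have h := hInc (lam * u) u hlu (by nlinarith)
    have hup : (0:ℝ) < u ^ p := Real.rpow_pos_of_pos hu p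
    have hmul : (lam * u) ^ p = lam ^ p * u ^ p := Real.mul_rpow hlam_pos.le hu.le
    rw [hmul, div_le_iff₀ (by positivity)] at h
    -- φ (lam*u) ≤ L * (φ u / u^p) * (lam^p * u^p)
    have h' : φ (lam * u) ≤ L * lam ^ p * φ u := by
      have : L * (φ u / u ^ p) * (lam ^ p * u ^ p) = L * lam ^ p * φ u := by
        field_simp
      linarith [h.trans_eq this]
    have hinv : lam ^ (-p) * lam ^ p = 1 := by
      rw [← Real.rpow_add hlam_pos]; simp
    calc C * φ (lam * u) ≤ C * (L * lam ^ p * φ u) := by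
          apply mul_le_mul_of_nonneg_left h' hC0.le
    _ = (lam ^ (-p) * lam ^ p) * φ u := by rw [hC_def]; field_simp
    _ = φ u := by rw [hinv, one_mul]
  -- conjPhi φ t ≤ ofReal C * conjPhi φ s
  have hmain : conjPhi φ t ≤ ENNReal.ofReal C * conjPhi φ s := by
    rw [conjPhi]
    apply iSup_le
    rintro ⟨u, hu⟩
    rcases eq_or_lt_of_le (Set.mem_Ici.mp hu) with h0 | hupos
    · simp only [← h0, mul_zero, zero_sub]
      rw [ENNReal.ofReal_eq_zero.mpr (by linarith [hφ0 0 le_rfl])]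
      exact zero_le
    · have hreal : t * u - φ u ≤ C * (s * (lam * u) - φ (lam * u)) := by
        have := hkey u hupos
        have hexp : C * (s * (lam * u)) = t * u := by
          rw [show s * (lam * u) = (s * lam) * u by ring, ← mul_assoc, hCsl]
        nlinarith [hkey u hupos]
      calc ENNReal.ofReal (t * u - φ u)
          ≤ ENNReal.ofReal (C * (s * (lam * u) - φ (lam * u))) :=
            ENNReal.ofReal_le_ofReal hreal
        _ = ENNReal.ofReal C * ENNReal.ofReal (s * (lam * u) - φ (lam * u)) :=
            ENNReal.ofReal_mul hC0.le
        _ ≤ ENNReal.ofReal C * conjPhi φ s := by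
            apply mul_le_mul_right
            exact le_iSup (fun v : Set.Ici (0:ℝ) => ENNReal.ofReal (s * v - φ v))
              (⟨lam * u, Set.mem_Ici.mpr (by positivity)⟩ : Set.Ici (0:ℝ))
  -- C = L^{1/(p-1)} * (t/s)^{p/(p-1)}
  have hCval : C = L ^ (1 / (p - 1)) * (t / s) ^ (p / (p - 1)) := by
    have h1 : lam ^ (-p) = (L * (t / s)) ^ (p / (p - 1)) := by
      rw [hlam_pow, show (1 / (p - 1)) * (-p) = -(p/(p-1)) by field_simp,
        Real.rpow_neg hx0.le, ← Real.inv_rpow hx0.le]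
      congr 1
      field_simp
    have h2 : (L * (t / s)) ^ (p / (p - 1)) =
        L ^ (p / (p - 1)) * (t / s) ^ (p / (p - 1)) :=
      Real.mul_rpow hL0.le (by positivity)
    have h3 : L ^ (p / (p - 1)) / L = L ^ (1 / (p - 1)) := by
      rw [show (1:ℝ) / (p - 1) = p / (p - 1) - 1 by field_simp; ring,
        Real.rpow_sub hL0, Real.rpow_one]
    rw [hC_def, h1, h2]
    rw [← h3]
    ring
  -- ENNReal algebra
  set T : ENNReal := ENNReal.ofReal t ^ (p / (p - 1)) with hT_def
  set S : ENNReal := ENNReal.ofReal s ^ (p / (p - 1)) with hS_def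
  have hT0 : T ≠ 0 := (ENNReal.rpow_pos (ENNReal.ofReal_pos.mpr ht) ENNReal.ofReal_ne_top).ne'
  have hTtop : T ≠ ⊤ := ENNReal.rpow_ne_top_of_nonneg hp'.le ENNReal.ofReal_ne_top
  have hS0 : S ≠ 0 := (ENNReal.rpow_pos (ENNReal.ofReal_pos.mpr hs) ENNReal.ofReal_ne_top).ne'
  have hStop : S ≠ ⊤ := ENNReal.rpow_ne_top_of_nonneg hp'.le ENNReal.ofReal_ne_top
  have hCof : ENNReal.ofReal C = ENNReal.ofReal (L ^ (1 / (p - 1))) * (T / S) := by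
    rw [hCval, ENNReal.ofReal_mul (by positivity)]
    congr 1
    rw [hT_def, hS_def, ← ENNReal.div_rpow_of_nonneg _ _ hp'.le,
      ← ENNReal.ofReal_div_of_pos hs,
      ENNReal.ofReal_rpow_of_pos (div_pos ht hs)]
  calc conjPhi φ t / T ≤ (ENNReal.ofReal C * conjPhi φ s) / T :=
        ENNReal.div_le_div_right hmain T
    _ = ENNReal.ofReal (L ^ (1 / (p - 1))) * (conjPhi φ s / S) := by
        rw [hCof]
        generalize ENNReal.ofReal (L ^ (1 / (p - 1))) = l
        generalize conjPhi φ s = A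
        rw [div_eq_mul_inv, div_eq_mul_inv, div_eq_mul_inv,
          show l * (T * S⁻¹) * A * T⁻¹ = l * (A * S⁻¹) * (T * T⁻¹) by ring,
          ENNReal.mul_inv_cancel hT0 hTtop, mul_one]
end

section
/- Let φ: [0,∞) → [0,∞) satisfy (aDec)_q with constant L ≥ 1 for some q > 1. Then φ*(t) = sup_{s≥0}(t·s − φ(s)) satisfies (aInc)_{q/(q−1)} with a constant depending only on L and q. -/
/-- if φ satisfies (aDec)_q with constant L for q > 1, then φ* satisfies
(aInc)_{q/(q−1)} with a constant depending only on L and q. -/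
theorem stmt5 (q L : ℝ) (hq : 1 < q) (hL : 1 ≤ L) :
    ∃ L' : ℝ, 1 ≤ L' ∧
      ∀ φ : ℝ → ℝ,
        (∀ t : ℝ, 0 ≤ t → 0 ≤ φ t) →
        (∀ s t : ℝ, 0 < s → s ≤ t → φ t / t ^ q ≤ L * (φ s / s ^ q)) →
        ∀ s t : ℝ, 0 < s → s ≤ t →
          conjPhi φ s / ENNReal.ofReal s ^ (q / (q - 1)) ≤
            ENNReal.ofReal L' * (conjPhi φ t / ENNReal.ofReal t ^ (q / (q - 1))) := by
  have hq1 : (0:ℝ) < q - 1 := by linarith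
  set p := q / (q - 1) with hp_def
  have hp_pos : 0 < p := div_pos (by linarith) hq1
  have hL0 : (0:ℝ) < L := lt_of_lt_of_le one_pos hL
  refine ⟨L ^ p, Real.one_le_rpow hL hp_pos.le, ?_⟩
  intro φ hφ0 hdec s t hs hst
  have ht : 0 < t := hs.trans_le hst
  set w := L * s / t with hw_def
  have hw0 : 0 < w := by positivity
  -- Key step: conjPhi φ s ≤ (L s / t)^p * conjPhi φ t
  have key : conjPhi φ s ≤ ENNReal.ofReal (w ^ p) * conjPhi φ t := by
    rw [conjPhi]
    apply iSup_le
    rintro ⟨u, hu⟩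
    simp only [Set.mem_Ici] at hu
    rcases le_or_gt (s * u - φ u) 0 with hneg | hpos
    · simp [ENNReal.ofReal_eq_zero.mpr hneg]
    rcases le_total t (L * s) with hcase | hcase
    · -- here w ≥ 1, use v = u
      have hw1 : 1 ≤ w := (one_le_div ht).mpr hcase
      have hK1 : 1 ≤ w ^ p := Real.one_le_rpow hw1 hp_pos.le
      calc ENNReal.ofReal (s * u - φ u)
          ≤ ENNReal.ofReal (t * u - φ u) := by
            apply ENNReal.ofReal_le_ofReal; nlinarith
        _ ≤ conjPhi φ t :=
            le_iSup (fun x : Set.Ici (0:ℝ) => ENNReal.ofReal (t * x - φ x))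
              ⟨u, Set.mem_Ici.mpr hu⟩
        _ ≤ ENNReal.ofReal (w ^ p) * conjPhi φ t := by
            nth_rewrite 1 [← one_mul (conjPhi φ t)]
            exact mul_le_mul_left (ENNReal.one_le_ofReal.mpr hK1) _
    · -- here w ≤ 1, use v = c * u with c = w^(-(1/(q-1)))
      have hw1 : w ≤ 1 := (div_le_one ht).mpr hcase
      have hu0 : 0 < u := by nlinarith [hφ0 u hu]
      set c := w ^ (-(1 / (q - 1))) with hc_def
      have hc0 : 0 < c := Real.rpow_pos_of_pos hw0 _
      have hc1 : 1 ≤ c := by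
        rw [hc_def, Real.rpow_neg hw0.le]
        have h1 : w ^ (1 / (q - 1)) ≤ 1 := Real.rpow_le_one hw0.le hw1 (by positivity)
        have h2 : 0 < w ^ (1 / (q - 1)) := Real.rpow_pos_of_pos hw0 _
        exact (one_le_inv₀ h2).mpr h1
      set v := c * u with hv_def
      have hv0 : 0 < v := mul_pos hc0 hu0
      have huv : u ≤ v := le_mul_of_one_le_left hu0.le hc1
      have hK0 : 0 < w ^ p := Real.rpow_pos_of_pos hw0 p
      -- φ v ≤ L * c^q * φ u
      have hφv : φ v ≤ L * c ^ q * φ u := by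
        have h1 : φ v / v ^ q ≤ L * (φ u / u ^ q) := hdec u v hu0 huv
        have huq : (0:ℝ) < u ^ q := Real.rpow_pos_of_pos hu0 q
        have hvq : (0:ℝ) < v ^ q := Real.rpow_pos_of_pos hv0 q
        have hvq' : v ^ q = c ^ q * u ^ q := Real.mul_rpow hc0.le hu0.le
        rw [div_le_iff₀ hvq] at h1
        calc φ v ≤ L * (φ u / u ^ q) * v ^ q := h1
          _ = L * c ^ q * φ u := by rw [hvq']; field_simp; try ring
      -- exponent identities
      have hcw : w ^ p * c = w := by
        rw [hc_def, ← Real.rpow_add hw0,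
          show p + -(1 / (q - 1)) = 1 by rw [hp_def]; field_simp; try ring, Real.rpow_one]
      have hcq : w ^ p * c ^ q = 1 := by
        have hcq' : c ^ q = w ^ (-(1 / (q - 1)) * q) := by
          rw [hc_def, ← Real.rpow_mul hw0.le]
        rw [hcq', ← Real.rpow_add hw0,
          show p + -(1 / (q - 1)) * q = 0 by rw [hp_def]; field_simp; try ring,
          Real.rpow_zero]
      -- real inequality
      have hwt : w * t = L * s := by rw [hw_def]; field_simp
      have h2 : w ^ p * (t * v) = L * (s * u) := by
        calc w ^ p * (t * v) = (w ^ p * c) * t * u := by rw [hv_def]; ring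
          _ = (w * t) * u := by rw [hcw]
          _ = L * (s * u) := by rw [hwt]; ring
      have h3 : w ^ p * φ v ≤ L * φ u := by
        calc w ^ p * φ v ≤ w ^ p * (L * c ^ q * φ u) :=
              mul_le_mul_of_nonneg_left hφv hK0.le
          _ = (w ^ p * c ^ q) * (L * φ u) := by ring
          _ = L * φ u := by rw [hcq]; ring
      have hreal : s * u - φ u ≤ w ^ p * (t * v - φ v) := by
        nlinarith [mul_nonneg (by linarith : (0:ℝ) ≤ L - 1) hpos.le]
      calc ENNReal.ofReal (s * u - φ u)
          ≤ ENNReal.ofReal (w ^ p * (t * v - φ v)) := ENNReal.ofReal_le_ofReal hreal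
        _ = ENNReal.ofReal (w ^ p) * ENNReal.ofReal (t * v - φ v) :=
            ENNReal.ofReal_mul hK0.le
        _ ≤ ENNReal.ofReal (w ^ p) * conjPhi φ t := by
            apply mul_le_mul_right
            exact le_iSup (fun x : Set.Ici (0:ℝ) => ENNReal.ofReal (t * x - φ x))
              ⟨v, Set.mem_Ici.mpr hv0.le⟩
  -- conclude by dividing
  have hS0 : (ENNReal.ofReal s) ^ p ≠ 0 := by
    simp [ENNReal.rpow_eq_zero_iff, ENNReal.ofReal_eq_zero, hs, not_le.mpr hs, hp_pos]
  have hStop : (ENNReal.ofReal s) ^ p ≠ ⊤ := by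
    simp [ENNReal.rpow_eq_top_iff, ENNReal.ofReal_eq_zero, not_le.mpr hs, hp_pos]
  rw [ENNReal.div_le_iff hS0 hStop]
  have hwp : ENNReal.ofReal (w ^ p)
      = ENNReal.ofReal (L ^ p) * ((ENNReal.ofReal s) ^ p / (ENNReal.ofReal t) ^ p) := by
    rw [hw_def, show L * s / t = L * (s / t) by ring,
      Real.mul_rpow hL0.le (by positivity), Real.div_rpow hs.le ht.le,
      ENNReal.ofReal_mul (by positivity), ENNReal.ofReal_div_of_pos (by positivity),
      ENNReal.ofReal_rpow_of_pos hs, ENNReal.ofReal_rpow_of_pos ht]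
  calc conjPhi φ s ≤ ENNReal.ofReal (w ^ p) * conjPhi φ t := key
    _ = ENNReal.ofReal (L ^ p) * ((ENNReal.ofReal s) ^ p / (ENNReal.ofReal t) ^ p)
        * conjPhi φ t := by rw [hwp]
    _ = ENNReal.ofReal (L ^ p) * (conjPhi φ t / (ENNReal.ofReal t) ^ p)
        * (ENNReal.ofReal s) ^ p := by
        rw [div_eq_mul_inv, div_eq_mul_inv]; ring
end

section
/- Let φ: [0,∞) → [0,∞) be a Φ-prefunction (non-decreasing, φ(0)=0, lim_{t→0+}φ(t)=0, lim_{t→∞}φ(t)=∞) satisfying (aDec)_1 with constant L, i.e. t ↦ φ(t)/t is almost decreasing. Then there exists a concave function ψ: [0,∞) → [0,∞) with ψ(0)=0 such that φ(t) ≈ ψ(t), i.e. there is a constant C depending only on L with (1/C)·ψ(t) ≤ φ(t) ≤ C·ψ(t) for all t ≥ 0. -/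
/-- a Φ-prefunction satisfying (aDec)_1 is equivalent to a concave
function vanishing at 0. -/
theorem stmt6 (φ : ℝ → ℝ) (L : ℝ) (hL : 1 ≤ L)
    (hpos : ∀ t : ℝ, 0 ≤ t → 0 ≤ φ t)
    (hmono : ∀ s t : ℝ, 0 ≤ s → s ≤ t → φ s ≤ φ t)
    (h0 : φ 0 = 0)
    (hlim0 : Filter.Tendsto φ (nhdsWithin 0 (Set.Ioi 0)) (nhds 0))
    (hlimtop : Filter.Tendsto φ Filter.atTop Filter.atTop)
    (hadec : ∀ s t : ℝ, 0 < s → s ≤ t → φ t / t ≤ L * (φ s / s)) :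
    ∃ ψ : ℝ → ℝ, ConcaveOn ℝ (Set.Ici 0) ψ ∧ ψ 0 = 0 ∧ (∀ t : ℝ, 0 ≤ t → 0 ≤ ψ t) ∧
      ∃ C : ℝ, 0 < C ∧ ∀ t : ℝ, 0 ≤ t → (1 / C) * ψ t ≤ φ t ∧ φ t ≤ C * ψ t := by
  have hLpos : (0:ℝ) < L := lt_of_lt_of_le one_pos hL
  haveI : Nonempty {s : ℝ // 0 < s} := ⟨⟨1, one_pos⟩⟩
  set ψ : ℝ → ℝ := fun t => ⨅ s : {s : ℝ // 0 < s}, φ s * (1 + t / s) with hψdef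
  -- nonnegativity of each term
  have hterm : ∀ (t : ℝ), 0 ≤ t → ∀ s : {s : ℝ // 0 < s}, 0 ≤ φ s * (1 + t / s) := by
    intro t ht s
    have hs := s.2
    have := hpos s hs.le
    positivity
  have hB : ∀ (t : ℝ), 0 ≤ t →
      BddBelow (Set.range fun s : {s : ℝ // 0 < s} => φ s * (1 + t / s)) := by
    intro t ht
    exact ⟨0, by rintro x ⟨s, rfl⟩; exact hterm t ht s⟩
  have hψnn : ∀ t : ℝ, 0 ≤ t → 0 ≤ ψ t := fun t ht => le_ciInf (hterm t ht)
  -- ψ t ≤ 2 φ t for t > 0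
  have hψle : ∀ t : ℝ, 0 < t → ψ t ≤ 2 * φ t := by
    intro t ht
    calc ψ t ≤ φ t * (1 + t / t) := ciInf_le (hB t ht.le) (⟨t, ht⟩ : {s : ℝ // 0 < s})
      _ = 2 * φ t := by rw [div_self ht.ne']; ring
  -- φ t ≤ L * ψ t for t ≥ 0
  have hφle : ∀ t : ℝ, 0 ≤ t → φ t ≤ L * ψ t := by
    intro t ht
    rw [← div_le_iff₀' hLpos]
    refine le_ciInf fun s => ?_
    rw [div_le_iff₀' hLpos]
    have hs := s.2
    have hφs := hpos s hs.le
    rcases lt_or_ge t s with h | h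
    · have h1 : φ t ≤ φ s := hmono t s ht h.le
      have h2 : (1:ℝ) ≤ 1 + t / s := by
        have : (0:ℝ) ≤ t / s := div_nonneg ht hs.le
        linarith
      calc φ t ≤ φ s * (1 + t / s) := by nlinarith
        _ ≤ L * (φ s * (1 + t / s)) := by nlinarith [hterm t ht s]
    · rcases eq_or_lt_of_le ht with rfl | ht'
      · rw [h0]; exact mul_nonneg hLpos.le (hterm 0 le_rfl s)
      · have hle := hadec s t s.2 h
        have h1 : φ t ≤ L * (φ s / s) * t := by
          rw [← div_le_iff₀ ht']; exact hle
        calc φ t ≤ L * (φ s / s) * t := h1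
          _ = L * (φ s * (t / s)) := by field_simp
          _ ≤ L * (φ s * (1 + t / s)) := by
              have h2 : φ s * (t / s) ≤ φ s * (1 + t / s) := by
                have h3 : t / s ≤ 1 + t / s := by linarith
                exact mul_le_mul_of_nonneg_left h3 hφs
              nlinarith
  -- ψ 0 = 0
  have hψ0 : ψ 0 = 0 := by
    refine le_antisymm ?_ (hψnn 0 le_rfl)
    refine le_of_forall_pos_le_add fun ε hε => ?_
    have h1 : ∀ᶠ s in nhdsWithin 0 (Set.Ioi 0), φ s < ε := hlim0 (Iio_mem_nhds hε)
    rcases (h1.and eventually_mem_nhdsWithin).exists with ⟨s, hsφ, hs⟩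
    have hs' : (0:ℝ) < s := hs
    have h2 : ψ 0 ≤ φ s * (1 + 0 / s) := ciInf_le (hB 0 le_rfl) (⟨s, hs'⟩ : {s : ℝ // 0 < s})
    have h3 : φ s * (1 + 0 / s) = φ s := by rw [zero_div]; ring
    linarith [h3 ▸ h2]
  -- concavity
  have hconc : ConcaveOn ℝ (Set.Ici 0) ψ := by
    refine ⟨convex_Ici 0, ?_⟩
    intro x hx y hy a b ha hb hab
    simp only [smul_eq_mul]
    have hx' : (0:ℝ) ≤ x := hx
    have hy' : (0:ℝ) ≤ y := hy
    have hxy : 0 ≤ a * x + b * y := add_nonneg (mul_nonneg ha hx') (mul_nonneg hb hy')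
    refine le_ciInf fun s => ?_
    have hs := s.2
    have h1 : ψ x ≤ φ s * (1 + x / s) := ciInf_le (hB x hx') s
    have h2 : ψ y ≤ φ s * (1 + y / s) := ciInf_le (hB y hy') s
    have key : φ s * (1 + (a * x + b * y) / s)
        = a * (φ s * (1 + x / s)) + b * (φ s * (1 + y / s)) := by
      field_simp
      linear_combination (-(φ (s:ℝ) * (s:ℝ))) * hab
    rw [key]
    exact add_le_add (mul_le_mul_of_nonneg_left h1 ha) (mul_le_mul_of_nonneg_left h2 hb)
  refine ⟨ψ, hconc, hψ0, hψnn, L + 2, by linarith, fun t ht => ?_⟩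
  constructor
  · rw [div_mul_eq_mul_div, one_mul, div_le_iff₀ (by linarith : (0:ℝ) < L + 2)]
    rcases eq_or_lt_of_le ht with rfl | ht'
    · rw [hψ0, h0]; simp
    · have := hψle t ht'
      have := hpos t ht
      nlinarith
  · have := hφle t ht
    have := hψnn t ht
    nlinarith
end

section
/- Let φ: [0,∞) → [0,∞) satisfy (aInc)_p and (aDec)_q with constant L, for 1 < p ≤ q. Then for any s, t ≥ 0 and κ ∈ (0,1), there is a constant C depending only on L, p, q such that t·s ≤ C·(κ·φ(t) + κ^{−1/(p−1)}·φ*(s)), where φ* is the conjugate function. -/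
/-- if φ satisfies (aInc)_p and (aDec)_q with constant L, 1 < p ≤ q,
then t·s ≤ C·(κ·φ(t) + κ^{−1/(p−1)}·φ*(s)) for all s, t ≥ 0 and κ ∈ (0,1). -/
theorem stmt8 (p q L : ℝ) (hp : 1 < p) (hpq : p ≤ q) (hL : 1 ≤ L) :
    ∃ C : ℝ, 0 < C ∧
      ∀ φ : ℝ → ℝ,
        (∀ t : ℝ, 0 ≤ t → 0 ≤ φ t) →
        (∀ s t : ℝ, 0 < s → s ≤ t → φ s / s ^ p ≤ L * (φ t / t ^ p)) →
        (∀ s t : ℝ, 0 < s → s ≤ t → φ t / t ^ q ≤ L * (φ s / s ^ q)) →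
        ∀ s t κ : ℝ, 0 ≤ s → 0 ≤ t → 0 < κ → κ < 1 →
          ENNReal.ofReal (t * s) ≤
            ENNReal.ofReal (C * κ * φ t) +
              ENNReal.ofReal (C * κ ^ (-(1 : ℝ) / (p - 1))) * conjPhi φ s := by
  have hL0 : (0 : ℝ) < L := lt_of_lt_of_le one_pos hL
  refine ⟨L, hL0, ?_⟩
  intro φ hφ0 hinc _hdec s t κ hs ht hκ hκ1
  rcases eq_or_lt_of_le ht with h0 | ht
  · simp [← h0]
  have hp1 : (0 : ℝ) < p - 1 := by linarith
  set a := κ ^ ((1 : ℝ) / (p - 1)) with ha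
  have ha0 : 0 < a := Real.rpow_pos_of_pos hκ _
  have ha1 : a ≤ 1 := Real.rpow_le_one hκ.le hκ1.le (by positivity)
  set lam := a / L with hlam
  have hlam0 : 0 < lam := div_pos ha0 hL0
  have hlam1 : lam ≤ 1 := by
    rw [hlam, div_le_one hL0]; exact ha1.trans hL
  have hkey : κ ^ (-(1 : ℝ) / (p - 1)) = a⁻¹ := by
    rw [ha, ← Real.rpow_neg hκ.le]
    ring_nf
  -- a ^ (p-1) = κ
  have hap1 : a ^ (p - 1) = κ := by
    rw [ha, ← Real.rpow_mul hκ.le, one_div_mul_cancel (ne_of_gt hp1), Real.rpow_one]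
  have hap : a ^ p = κ * a := by
    have : a ^ p = a ^ (p - 1 + 1) := by norm_num
    rw [this, Real.rpow_add ha0, hap1, Real.rpow_one]
  -- φ(lam * t) ≤ L * lam^p * φ t
  have hltt : lam * t ≤ t := by nlinarith
  have hlt0 : 0 < lam * t := mul_pos hlam0 ht
  have hinc' := hinc (lam * t) t hlt0 hltt
  have htp : (0 : ℝ) < t ^ p := Real.rpow_pos_of_pos ht p
  have hltp : (0 : ℝ) < (lam * t) ^ p := Real.rpow_pos_of_pos hlt0 p
  have hmul : (lam * t) ^ p = lam ^ p * t ^ p := Real.mul_rpow hlam0.le ht.le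
  have hφlam : φ (lam * t) ≤ L * lam ^ p * φ t := by
    rw [hmul] at hinc'
    rw [div_le_iff₀ (by positivity : (0:ℝ) < lam ^ p * t ^ p)] at hinc'
    calc φ (lam * t) ≤ L * (φ t / t ^ p) * (lam ^ p * t ^ p) := hinc'
      _ = L * lam ^ p * φ t := by field_simp
  -- L/a * φ(lam*t) ≤ L * κ * φ t
  have hLp : L ≤ L ^ p := by
    calc L = L ^ (1 : ℝ) := (Real.rpow_one L).symm
      _ ≤ L ^ p := Real.rpow_le_rpow_of_exponent_le hL hp.le
  have hLp0 : (0 : ℝ) < L ^ p := Real.rpow_pos_of_pos hL0 p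
  have hlamp : lam ^ p = a ^ p / L ^ p := Real.div_rpow ha0.le hL0.le p
  have hφt0 : 0 ≤ φ t := hφ0 t ht.le
  have hcore : L * a⁻¹ * φ (lam * t) ≤ L * κ * φ t := by
    have h1 : L * a⁻¹ * φ (lam * t) ≤ L * a⁻¹ * (L * lam ^ p * φ t) := by
      apply mul_le_mul_of_nonneg_left hφlam (by positivity)
    have h2 : L * a⁻¹ * (L * lam ^ p * φ t) = (L ^ 2 / L ^ p) * (κ * φ t) := by
      rw [hlamp, hap]
      field_simp
    have h3 : (L ^ 2 / L ^ p) * (κ * φ t) ≤ L * (κ * φ t) := by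
      apply mul_le_mul_of_nonneg_right _ (by positivity)
      rw [div_le_iff₀ hLp0]
      nlinarith
    calc L * a⁻¹ * φ (lam * t) ≤ (L ^ 2 / L ^ p) * (κ * φ t) := by rw [← h2]; exact h1
      _ ≤ L * (κ * φ t) := h3
      _ = L * κ * φ t := by ring
  -- real Young step
  have hreal : t * s ≤ L * κ * φ t + L * a⁻¹ * (s * (lam * t) - φ (lam * t)) := by
    have hid : L * a⁻¹ * (s * (lam * t)) = t * s := by
      rw [hlam]; field_simp
    nlinarith [hcore, hid]
  calc ENNReal.ofReal (t * s)
      ≤ ENNReal.ofReal (L * κ * φ t + L * a⁻¹ * (s * (lam * t) - φ (lam * t))) :=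
        ENNReal.ofReal_le_ofReal hreal
    _ ≤ ENNReal.ofReal (L * κ * φ t) +
        ENNReal.ofReal (L * a⁻¹ * (s * (lam * t) - φ (lam * t))) := ENNReal.ofReal_add_le
    _ = ENNReal.ofReal (L * κ * φ t) +
        ENNReal.ofReal (L * a⁻¹) * ENNReal.ofReal (s * (lam * t) - φ (lam * t)) := by
          congr 1
          exact ENNReal.ofReal_mul (by positivity)
    _ ≤ ENNReal.ofReal (L * κ * φ t) +
        ENNReal.ofReal (L * κ ^ (-(1 : ℝ) / (p - 1))) * conjPhi φ s := by
          rw [hkey]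
          gcongr
          exact le_iSup (fun u : Set.Ici (0 : ℝ) => ENNReal.ofReal (s * ↑u - φ ↑u))
            ⟨lam * t, le_of_lt hlt0⟩
end

section
/- Let φ: [0,∞) → [0,∞) be convex and C¹ with φ(0)=0 and φ' satisfying (Inc)_{p-1} and (Dec)_{q-1} for 1 < p ≤ q. Define the vector field A(x) := φ'(|x|)·x/|x| for x ∈ ℝⁿ \ {0}, A(0) := 0. Then there is a constant c > 0 depending only on p, q such that for all x, y ∈ ℝⁿ (not both zero): (A(x) − A(y))·(x − y) ≥ c · (φ'(|x|+|y|)/(|x|+|y|)) · |x − y|². -/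
section Stmt10Aux

variable {φ' : ℝ → ℝ} {p q : ℝ}

private lemma stmt10_keyDec (hq1 : (0:ℝ) ≤ q - 1)
    (hpos : ∀ t : ℝ, 0 < t → 0 ≤ φ' t)
    (hdec : ∀ s t : ℝ, 0 < s → s ≤ t → φ' t / t ^ (q - 1) ≤ φ' s / s ^ (q - 1))
    {a b : ℝ} (hb : 0 < b) (hba : b ≤ a) :
    φ' (a + b) ≤ 2 ^ (q - 1) * φ' a := by
  have ha : 0 < a := lt_of_lt_of_le hb hba
  have h1 := hdec a (a + b) ha (by linarith)
  have hap : (0:ℝ) < a ^ (q - 1) := Real.rpow_pos_of_pos ha _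
  have habp : (0:ℝ) < (a + b) ^ (q - 1) := Real.rpow_pos_of_pos (by linarith) _
  rw [div_le_div_iff₀ habp hap] at h1
  have h2 : (a + b) ^ (q - 1) ≤ 2 ^ (q - 1) * a ^ (q - 1) := by
    rw [← Real.mul_rpow (by norm_num) ha.le]
    exact Real.rpow_le_rpow (by linarith) (by linarith) hq1
  have h3 : φ' a * (a + b) ^ (q - 1) ≤ φ' a * (2 ^ (q - 1) * a ^ (q - 1)) :=
    mul_le_mul_of_nonneg_left h2 (hpos a ha)
  have h4 : φ' (a + b) * a ^ (q - 1) ≤ 2 ^ (q - 1) * φ' a * a ^ (q - 1) := by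
    nlinarith [h1, h3]
  exact le_of_mul_le_mul_right h4 hap

private lemma stmt10_claimA (hp : 1 < p) (hq1 : (0:ℝ) ≤ q - 1)
    (hpos : ∀ t : ℝ, 0 < t → 0 ≤ φ' t)
    (hdec : ∀ s t : ℝ, 0 < s → s ≤ t → φ' t / t ^ (q - 1) ≤ φ' s / s ^ (q - 1))
    {a b : ℝ} (ha : 0 < a) (hb : 0 < b) :
    (min 1 (p - 1) / 2 ^ (q - 1)) * φ' (a + b) ≤ φ' a + φ' b := by
  have h2q : (0:ℝ) < 2 ^ (q - 1) := Real.rpow_pos_of_pos two_pos _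
  set c : ℝ := min 1 (p - 1) / 2 ^ (q - 1) with hc
  have hm0 : 0 < min 1 (p - 1) := lt_min one_pos (by linarith)
  have hm1 : min 1 (p - 1) ≤ 1 := min_le_left _ _
  have hc0 : 0 < c := div_pos hm0 h2q
  have hc2q : c * 2 ^ (q - 1) = min 1 (p - 1) := div_mul_cancel₀ _ (ne_of_gt h2q)
  have base : ∀ a b : ℝ, 0 < b → b ≤ a → c * φ' (a + b) ≤ φ' a + φ' b := by
    intro a b hb hba
    have ha : 0 < a := lt_of_lt_of_le hb hba
    have h1 : c * φ' (a + b) ≤ c * (2 ^ (q - 1) * φ' a) :=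
      mul_le_mul_of_nonneg_left (stmt10_keyDec hq1 hpos hdec hb hba) hc0.le
    have h2 : c * (2 ^ (q - 1) * φ' a) = min 1 (p - 1) * φ' a := by
      rw [← mul_assoc, hc2q]
    have h3 : min 1 (p - 1) * φ' a ≤ φ' a := by
      nlinarith [hpos a ha, hm1]
    have := hpos b hb
    linarith
  rcases le_total b a with h | h
  · exact base a b hb h
  · have := base b a ha h
    rw [add_comm] at this
    linarith

private lemma stmt10_claimB (hp : 1 < p) (hq1 : (0:ℝ) ≤ q - 1)
    (hpos : ∀ t : ℝ, 0 < t → 0 ≤ φ' t)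
    (hinc : ∀ s t : ℝ, 0 < s → s ≤ t → φ' s / s ^ (p - 1) ≤ φ' t / t ^ (p - 1))
    (hdec : ∀ s t : ℝ, 0 < s → s ≤ t → φ' t / t ^ (q - 1) ≤ φ' s / s ^ (q - 1))
    {a b : ℝ} (ha : 0 < a) (hb : 0 < b) :
    (min 1 (p - 1) / 2 ^ (q - 1)) * (φ' (a + b) / (a + b)) * (a - b) ^ 2 ≤
      (φ' a - φ' b) * (a - b) := by
  have h2q : (0:ℝ) < 2 ^ (q - 1) := Real.rpow_pos_of_pos two_pos _
  set c : ℝ := min 1 (p - 1) / 2 ^ (q - 1) with hc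
  have hm0 : 0 < min 1 (p - 1) := lt_min one_pos (by linarith)
  have hm1 : min 1 (p - 1) ≤ 1 := min_le_left _ _
  have hmp : min 1 (p - 1) ≤ p - 1 := min_le_right _ _
  have hc0 : 0 < c := div_pos hm0 h2q
  have base : ∀ a b : ℝ, 0 < b → b ≤ a →
      c * (φ' (a + b) / (a + b)) * (a - b) ^ 2 ≤ (φ' a - φ' b) * (a - b) := by
    intro a b hb hba
    have ha : 0 < a := lt_of_lt_of_le hb hba
    have hane : a ≠ 0 := ne_of_gt ha
    have h2ne : (2:ℝ) ^ (q - 1) ≠ 0 := ne_of_gt h2q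
    have hab : 0 < a + b := by linarith
    have hfa : 0 ≤ φ' a := hpos a ha
    have hs0 : 0 < b / a := div_pos hb ha
    have hs1 : b / a ≤ 1 := (div_le_one ha).mpr hba
    have hap : (0:ℝ) < a ^ (p - 1) := Real.rpow_pos_of_pos ha _
    have hbp : (0:ℝ) < b ^ (p - 1) := Real.rpow_pos_of_pos hb _
    -- Step 1: φ' b ≤ φ' a * (b/a)^(p-1)
    have hstep1 : φ' b ≤ φ' a * (b / a) ^ (p - 1) := by
      have h1 := hinc b a hb hba
      rw [div_le_div_iff₀ hbp hap] at h1
      have hdr : (b / a) ^ (p - 1) = b ^ (p - 1) / a ^ (p - 1) :=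
        Real.div_rpow hb.le ha.le _
      rw [hdr, ← mul_div_assoc, le_div_iff₀ hap]
      linarith [h1]
    -- Step 2: (b/a)^(p-1) ≤ 1 - m (1 - b/a)
    have hstep2 : (b / a) ^ (p - 1) ≤ 1 - min 1 (p - 1) * (1 - b / a) := by
      rcases le_total p 2 with hp2 | hp2
      · have hB : (b / a) ^ (p - 1) ≤ 1 + (p - 1) * (b / a - 1) := by
          have := rpow_one_add_le_one_add_mul_self
            (s := b / a - 1) (by linarith) (p := p - 1) (by linarith) (by linarith)
          simpa using this
        have hmm : min 1 (p - 1) * (1 - b / a) ≤ (p - 1) * (1 - b / a) :=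
          mul_le_mul_of_nonneg_right hmp (by linarith)
        linarith
      · have hB : (b / a) ^ (p - 1) ≤ (b / a) ^ (1:ℝ) :=
          Real.rpow_le_rpow_of_exponent_ge hs0 hs1 (by linarith)
        rw [Real.rpow_one] at hB
        have hmm : min 1 (p - 1) * (1 - b / a) ≤ 1 * (1 - b / a) :=
          mul_le_mul_of_nonneg_right hm1 (by linarith)
        linarith
    -- Step 3: m φ'(a) (a-b) ≤ (φ'(a) - φ'(b)) a
    have hstep3 : min 1 (p - 1) * φ' a * (a - b) ≤ (φ' a - φ' b) * a := by
      have h1 : φ' b ≤ φ' a * (1 - min 1 (p - 1) * (1 - b / a)) :=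
        hstep1.trans (mul_le_mul_of_nonneg_left hstep2 hfa)
      have h2 : φ' b * a ≤ φ' a * (1 - min 1 (p - 1) * (1 - b / a)) * a :=
        mul_le_mul_of_nonneg_right h1 ha.le
      have h3 : φ' a * (1 - min 1 (p - 1) * (1 - b / a)) * a =
          φ' a * (a - min 1 (p - 1) * (a - b)) := by
        field_simp
      rw [h3] at h2
      nlinarith [h2]
    -- Step 4: combine
    have h4 : φ' (a + b) / (a + b) ≤ 2 ^ (q - 1) * φ' a / a :=
      div_le_div₀ (mul_nonneg h2q.le hfa) (stmt10_keyDec hq1 hpos hdec hb hba) ha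
        (by linarith)
    have h5 : c * (φ' (a + b) / (a + b)) * (a - b) ^ 2 ≤
        c * (2 ^ (q - 1) * φ' a / a) * (a - b) ^ 2 :=
      mul_le_mul_of_nonneg_right (mul_le_mul_of_nonneg_left h4 hc0.le) (sq_nonneg _)
    have h6 : c * (2 ^ (q - 1) * φ' a / a) = min 1 (p - 1) * φ' a / a := by
      rw [hc]
      field_simp
    rw [h6] at h5
    have h7 : min 1 (p - 1) * φ' a / a * (a - b) ^ 2 ≤ (φ' a - φ' b) * (a - b) := by
      rw [div_mul_eq_mul_div, div_le_iff₀ ha]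
      nlinarith [mul_le_mul_of_nonneg_right hstep3 (sub_nonneg.mpr hba)]
    linarith
  rcases le_total b a with h | h
  · exact base a b hb h
  · have := base b a ha h
    rw [add_comm b a] at this
    have hsq : (b - a) ^ 2 = (a - b) ^ 2 := by ring
    have hrh : (φ' b - φ' a) * (b - a) = (φ' a - φ' b) * (a - b) := by ring
    rw [hsq, hrh] at this
    exact this

private lemma stmt10_main (hp : 1 < p) (hq1 : (0:ℝ) ≤ q - 1)
    (hpos : ∀ t : ℝ, 0 < t → 0 ≤ φ' t)
    (hinc : ∀ s t : ℝ, 0 < s → s ≤ t → φ' s / s ^ (p - 1) ≤ φ' t / t ^ (p - 1))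
    (hdec : ∀ s t : ℝ, 0 < s → s ≤ t → φ' t / t ^ (q - 1) ≤ φ' s / s ^ (q - 1))
    {a b t : ℝ} (ha : 0 < a) (hb : 0 < b) (habs : |t| ≤ a * b) :
    (min 1 (p - 1) / 2 ^ (q - 1)) * (φ' (a + b) / (a + b)) * (a ^ 2 - 2 * t + b ^ 2) ≤
      φ' a * a + φ' b * b - (φ' a / a + φ' b / b) * t := by
  have h2q : (0:ℝ) < 2 ^ (q - 1) := Real.rpow_pos_of_pos two_pos _
  set c : ℝ := min 1 (p - 1) / 2 ^ (q - 1) with hc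
  rw [abs_le] at habs
  obtain ⟨ht1, ht2⟩ := habs
  have habp : 0 < a + b := by linarith
  set G : ℝ := φ' (a + b) / (a + b) with hG
  have E1 : c * G * (a + b) ^ 2 ≤ (φ' a + φ' b) * (a + b) := by
    have h := stmt10_claimA hp hq1 hpos hdec ha hb
    have hid : c * G * (a + b) ^ 2 = c * φ' (a + b) * (a + b) := by
      rw [hG]
      field_simp
    rw [hid]
    nlinarith [mul_le_mul_of_nonneg_right h habp.le]
  have E2 : c * G * (a - b) ^ 2 ≤ (φ' a - φ' b) * (a - b) :=
    stmt10_claimB hp hq1 hpos hinc hdec ha hb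
  have hanz : a ≠ 0 := ne_of_gt ha
  have hbnz : b ≠ 0 := ne_of_gt hb
  have hid2 : (φ' a * a + φ' b * b - (φ' a / a + φ' b / b) * t) -
      c * G * (a ^ 2 - 2 * t + b ^ 2) =
      ((a * b - t) * ((φ' a + φ' b) * (a + b) - c * G * (a + b) ^ 2) +
       (a * b + t) * ((φ' a - φ' b) * (a - b) - c * G * (a - b) ^ 2)) / (2 * (a * b)) := by
    field_simp
    ring
  have hnum : 0 ≤ ((a * b - t) * ((φ' a + φ' b) * (a + b) - c * G * (a + b) ^ 2) +
      (a * b + t) * ((φ' a - φ' b) * (a - b) - c * G * (a - b) ^ 2)) :=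
    add_nonneg (mul_nonneg (by linarith) (by linarith)) (mul_nonneg (by linarith) (by linarith))
  have hden : (0:ℝ) < 2 * (a * b) := by positivity
  have hfin := div_nonneg hnum hden.le
  rw [← hid2] at hfin
  linarith

end Stmt10Aux

/-- strong monotonicity of the φ-Laplacian vector field
A(x) = φ'(|x|)·x/|x|. -/
theorem stmt10 (n : ℕ) (φ φ' : ℝ → ℝ) (p q : ℝ) (hp : 1 < p) (hpq : p ≤ q)
    (hconv : ConvexOn ℝ (Set.Ici 0) φ)
    (h0 : φ 0 = 0)
    (hderiv : ∀ t : ℝ, 0 < t → HasDerivAt φ (φ' t) t)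
    (hderivCont : ContinuousOn φ' (Set.Ici 0))
    (hinc : ∀ s t : ℝ, 0 < s → s ≤ t → φ' s / s ^ (p - 1) ≤ φ' t / t ^ (p - 1))
    (hdec : ∀ s t : ℝ, 0 < s → s ≤ t → φ' t / t ^ (q - 1) ≤ φ' s / s ^ (q - 1)) :
    ∃ c : ℝ, 0 < c ∧
      ∀ x y : EuclideanSpace ℝ (Fin n), (x ≠ 0 ∨ y ≠ 0) →
        c * (φ' (‖x‖ + ‖y‖) / (‖x‖ + ‖y‖)) * ‖x - y‖ ^ 2 ≤
          (inner ℝ ((φ' ‖x‖ / ‖x‖) • x - (φ' ‖y‖ / ‖y‖) • y) (x - y) : ℝ) := by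
  have hq : 1 < q := lt_of_lt_of_le hp hpq
  have hq1 : (0:ℝ) ≤ q - 1 := by linarith
  -- monotonicity of φ' from convexity
  have hmono : ∀ s t : ℝ, 0 < s → s < t → φ' s ≤ φ' t := by
    intro s t hs hst
    have hsS : s ∈ Set.Ici (0:ℝ) := le_of_lt hs
    have htS : t ∈ Set.Ici (0:ℝ) := le_of_lt (hs.trans hst)
    have h1 := hconv.le_slope_of_hasDerivAt hsS htS hst (hderiv s hs)
    have h2 := hconv.slope_le_of_hasDerivAt hsS htS hst (hderiv t (hs.trans hst))
    exact h1.trans h2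
  have h2q : (0:ℝ) < 2 ^ (q - 1) := Real.rpow_pos_of_pos two_pos _
  have h2q1 : (1:ℝ) < 2 ^ (q - 1) := by
    rw [show (1:ℝ) = (2:ℝ) ^ (0:ℝ) by simp]
    exact Real.rpow_lt_rpow_of_exponent_lt one_lt_two (by linarith)
  -- nonnegativity of φ' on (0, ∞)
  have hpos : ∀ t : ℝ, 0 < t → 0 ≤ φ' t := by
    intro t ht
    by_contra hneg
    push_neg at hneg
    have h1 : φ' t ≤ φ' (2 * t) := hmono t (2 * t) ht (by linarith)
    have htp : (0:ℝ) < t ^ (q - 1) := Real.rpow_pos_of_pos ht _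
    have h2tp : (0:ℝ) < (2 * t) ^ (q - 1) := Real.rpow_pos_of_pos (by linarith) _
    have h2 := hdec t (2 * t) ht (by linarith)
    rw [div_le_div_iff₀ h2tp htp] at h2
    rw [Real.mul_rpow (by norm_num : (0:ℝ) ≤ 2) ht.le] at h2
    have h3 : φ' (2 * t) ≤ φ' t * 2 ^ (q - 1) := by
      have h4 : φ' (2 * t) * t ^ (q - 1) ≤ φ' t * 2 ^ (q - 1) * t ^ (q - 1) := by
        nlinarith [h2]
      exact le_of_mul_le_mul_right h4 htp
    nlinarith [h1, h3, mul_pos (neg_pos.mpr hneg) (sub_pos.mpr h2q1)]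
  -- the constant
  have hm0 : 0 < min 1 (p - 1) := lt_min one_pos (by linarith)
  have hc0 : 0 < min 1 (p - 1) / 2 ^ (q - 1) := div_pos hm0 h2q
  have hc1 : min 1 (p - 1) / 2 ^ (q - 1) ≤ 1 := by
    rw [div_le_one h2q]
    have := min_le_left (1:ℝ) (p - 1)
    linarith
  refine ⟨min 1 (p - 1) / 2 ^ (q - 1), hc0, ?_⟩
  set c : ℝ := min 1 (p - 1) / 2 ^ (q - 1) with hc
  intro x y hxy
  by_cases hx : x = 0
  · have hy : y ≠ 0 := by
      rcases hxy with h | h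
      · exact absurd hx h
      · exact h
    subst hx
    have hb : 0 < ‖y‖ := norm_pos_iff.mpr hy
    have hg : 0 ≤ φ' ‖y‖ / ‖y‖ := div_nonneg (hpos _ hb) hb.le
    simp only [norm_zero, zero_add, zero_sub, smul_zero, norm_neg]
    rw [inner_neg_neg, real_inner_smul_left, real_inner_self_eq_norm_sq]
    have hsq : (0:ℝ) ≤ ‖y‖ ^ 2 := sq_nonneg _
    nlinarith [mul_nonneg hg hsq, hc1, hc0.le]
  · by_cases hy : y = 0
    · subst hy
      have ha : 0 < ‖x‖ := norm_pos_iff.mpr hx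
      have hg : 0 ≤ φ' ‖x‖ / ‖x‖ := div_nonneg (hpos _ ha) ha.le
      simp only [norm_zero, add_zero, sub_zero, smul_zero]
      rw [real_inner_smul_left, real_inner_self_eq_norm_sq]
      have hsq : (0:ℝ) ≤ ‖x‖ ^ 2 := sq_nonneg _
      nlinarith [mul_nonneg hg hsq, hc1, hc0.le]
    · have ha : 0 < ‖x‖ := norm_pos_iff.mpr hx
      have hb : 0 < ‖y‖ := norm_pos_iff.mpr hy
      have hts : |(inner ℝ x y : ℝ)| ≤ ‖x‖ * ‖y‖ := abs_real_inner_le_norm x y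
      have hnorm : ‖x - y‖ ^ 2 = ‖x‖ ^ 2 - 2 * (inner ℝ x y : ℝ) + ‖y‖ ^ 2 :=
        norm_sub_sq_real x y
      have hinner : (inner ℝ ((φ' ‖x‖ / ‖x‖) • x - (φ' ‖y‖ / ‖y‖) • y) (x - y) : ℝ) =
          φ' ‖x‖ * ‖x‖ + φ' ‖y‖ * ‖y‖ -
            (φ' ‖x‖ / ‖x‖ + φ' ‖y‖ / ‖y‖) * (inner ℝ x y : ℝ) := by
        rw [inner_sub_left, real_inner_smul_left, real_inner_smul_left,
          inner_sub_right, inner_sub_right, real_inner_self_eq_norm_sq,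
          real_inner_self_eq_norm_sq, real_inner_comm y x]
        have hxne : ‖x‖ ≠ 0 := ne_of_gt ha
        have hyne : ‖y‖ ≠ 0 := ne_of_gt hb
        field_simp
        ring
      rw [hnorm, hinner]
      exact stmt10_main hp hq1 hpos hinc hdec ha hb hts
end
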